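/- There is a bijection between the set of Sp_{2k}-ballot tableaux of one-column shape (1^a) and weight δ ∈ {0,1}^k, and the set of ((2k-a-|δ|)/2, (a-|δ|)/2)-ballot sequences over Z(δ) := {i : δᵢ = 0}, where |δ| = Σδᵢ. -/

import Mathlib

namespace OneColSpAux
variable {k a : ℕ}

/-- The set of tableau entries determined by a marked set `S` and the weight `δ`. -/
def Vset (δ : Fin k → ℕ) (S : Finset (Fin k)) : Finset ℕ :=
  (S.image (fun i : Fin k => 2*(i:ℕ)+2)) ∪
  ((S ∪ Finset.univ.filter (fun i => δ i = 1)).image (fun i : Fin k => 2*(i:ℕ)+1))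

lemma mem_Vset {δ : Fin k → ℕ} {S : Finset (Fin k)} {v : ℕ} : v ∈ Vset δ S ↔
    (∃ i ∈ S, 2*(i:ℕ)+2 = v) ∨ (∃ i : Fin k, (i ∈ S ∨ δ i = 1) ∧ 2*(i:ℕ)+1 = v) := by
  simp [Vset, Finset.mem_union, Finset.mem_image, or_and_right, exists_or]

lemma sum_delta (δ : Fin k → ℕ) (hδ : ∀ i, δ i ≤ 1) :
    ∑ i, δ i = (Finset.univ.filter (fun i => δ i = 1)).card := by
  rw [Finset.card_filter]
  refine Finset.sum_congr rfl (fun i _ => ?_)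
  have := hδ i
  by_cases h : δ i = 1 <;> simp [h] <;> omega

lemma card_Vset (δ : Fin k → ℕ) (S : Finset (Fin k)) (hS0 : ∀ i ∈ S, δ i = 0) :
    (Vset δ S).card = 2*S.card + (Finset.univ.filter (fun i => δ i = 1)).card := by
  have hdisj1 : Disjoint (S.image (fun i : Fin k => 2*(i:ℕ)+2))
      ((S ∪ Finset.univ.filter (fun i => δ i = 1)).image (fun i : Fin k => 2*(i:ℕ)+1)) := by
    rw [Finset.disjoint_left]
    rintro v hv hv'
    simp only [Finset.mem_image] at hv hv'
    obtain ⟨i, _, hi⟩ := hv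
    obtain ⟨j, _, hj⟩ := hv'
    omega
  have hdisj2 : Disjoint S (Finset.univ.filter (fun i => δ i = 1)) := by
    rw [Finset.disjoint_left]
    intro i hi hi'
    simp only [Finset.mem_filter] at hi'
    have := hS0 i hi
    omega
  have hinj2 : Function.Injective (fun i : Fin k => 2*(i:ℕ)+2) := by
    intro i j h
    have h' : 2*(i:ℕ)+2 = 2*(j:ℕ)+2 := h
    exact Fin.ext (by omega)
  have hinj1 : Function.Injective (fun i : Fin k => 2*(i:ℕ)+1) := by
    intro i j h
    have h' : 2*(i:ℕ)+1 = 2*(j:ℕ)+1 := h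
    exact Fin.ext (by omega)
  rw [Vset, Finset.card_union_of_disjoint hdisj1, Finset.card_image_of_injective _ hinj2,
    Finset.card_image_of_injective _ hinj1, Finset.card_union_of_disjoint hdisj2]
  ring

lemma card_filter_lt (n : ℕ) (hn : n ≤ k) :
    (Finset.univ.filter (fun j : Fin k => (j:ℕ) < n)).card = n := by
  have h : ∀ m ∈ Finset.range n, m < k := fun m hm =>
    lt_of_lt_of_le (Finset.mem_range.mp hm) hn
  have : Finset.univ.filter (fun j : Fin k => (j:ℕ) < n) = (Finset.range n).attachFin h := by
    ext j
    simp [Finset.mem_attachFin]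
  rw [this, Finset.card_attachFin, Finset.card_range]

lemma partition_count (δ : Fin k → ℕ) (hδ : ∀ i, δ i ≤ 1) (S : Finset (Fin k))
    (hS0 : ∀ i ∈ S, δ i = 0) (n : ℕ) (hn : n ≤ k) :
    (S.filter (fun j : Fin k => (j:ℕ) < n)).card
    + ((Finset.univ.filter (fun i => δ i = 1)).filter (fun j : Fin k => (j:ℕ) < n)).card
    + ((Finset.univ.filter (fun i => δ i = 0 ∧ i ∉ S)).filter (fun j : Fin k => (j:ℕ) < n)).card = n := by
  have h1 : S.filter (fun j : Fin k => (j:ℕ) < n)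
      = Finset.univ.filter (fun j : Fin k => j ∈ S ∧ (j:ℕ) < n) := by
    ext j; simp
  have h2 : (Finset.univ.filter (fun i => δ i = 1)).filter (fun j : Fin k => (j:ℕ) < n)
      = Finset.univ.filter (fun j : Fin k => δ j = 1 ∧ (j:ℕ) < n) := by
    ext j; simp [Finset.mem_filter, and_assoc]
  have h3 : (Finset.univ.filter (fun i => δ i = 0 ∧ i ∉ S)).filter (fun j : Fin k => (j:ℕ) < n)
      = Finset.univ.filter (fun j : Fin k => (δ j = 0 ∧ j ∉ S) ∧ (j:ℕ) < n) := by
    ext j; simp [Finset.mem_filter, and_assoc]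
  rw [h1, h2, h3, Finset.card_filter, Finset.card_filter, Finset.card_filter,
    ← Finset.sum_add_distrib, ← Finset.sum_add_distrib]
  have key : (∑ i : Fin k, (((if i ∈ S ∧ (i:ℕ) < n then 1 else 0)
      + if δ i = 1 ∧ (i:ℕ) < n then 1 else 0)
      + if (δ i = 0 ∧ i ∉ S) ∧ (i:ℕ) < n then 1 else 0))
      = ∑ i : Fin k, if (i:ℕ) < n then 1 else 0 := by
    refine Finset.sum_congr rfl (fun i _ => ?_)
    have := hδ i
    by_cases hiS : i ∈ S
    · have h0 := hS0 i hiS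
      by_cases hin : (i:ℕ) < n <;> simp [hiS, h0, hin]
    · by_cases hd : δ i = 1
      · by_cases hin : (i:ℕ) < n <;> simp [hiS, hd, hin]
      · have hd0 : δ i = 0 := by omega
        by_cases hin : (i:ℕ) < n <;> simp [hiS, hd, hd0, hin]
  rw [key, ← Finset.card_filter, card_filter_lt n hn]

lemma card_Vset_filter (δ : Fin k → ℕ) (S : Finset (Fin k)) (hS0 : ∀ i ∈ S, δ i = 0)
    (n : ℕ) :
    ((Vset δ S).filter (fun v => v ≤ 2*n)).card
      = 2*(S.filter (fun j : Fin k => (j:ℕ) < n)).card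
        + ((Finset.univ.filter (fun i => δ i = 1)).filter (fun j : Fin k => (j:ℕ) < n)).card := by
  have hq2 : ∀ T : Finset (Fin k), (T.image (fun i : Fin k => 2*(i:ℕ)+2)).filter (fun v => v ≤ 2*n)
      = (T.filter (fun j : Fin k => (j:ℕ) < n)).image (fun i : Fin k => 2*(i:ℕ)+2) := by
    intro T
    rw [Finset.filter_image]
    congr 1
    apply Finset.filter_congr
    intro j _
    omega
  have hq1 : ∀ T : Finset (Fin k), (T.image (fun i : Fin k => 2*(i:ℕ)+1)).filter (fun v => v ≤ 2*n)
      = (T.filter (fun j : Fin k => (j:ℕ) < n)).image (fun i : Fin k => 2*(i:ℕ)+1) := by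
    intro T
    rw [Finset.filter_image]
    congr 1
    apply Finset.filter_congr
    intro j _
    omega
  have hinj2 : Function.Injective (fun i : Fin k => 2*(i:ℕ)+2) := by
    intro i j h
    have h' : 2*(i:ℕ)+2 = 2*(j:ℕ)+2 := h
    exact Fin.ext (by omega)
  have hinj1 : Function.Injective (fun i : Fin k => 2*(i:ℕ)+1) := by
    intro i j h
    have h' : 2*(i:ℕ)+1 = 2*(j:ℕ)+1 := h
    exact Fin.ext (by omega)
  have hdisj1 : Disjoint ((S.filter (fun j : Fin k => (j:ℕ) < n)).image (fun i : Fin k => 2*(i:ℕ)+2))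
      (((S ∪ Finset.univ.filter (fun i => δ i = 1)).filter (fun j : Fin k => (j:ℕ) < n)).image
        (fun i : Fin k => 2*(i:ℕ)+1)) := by
    rw [Finset.disjoint_left]
    rintro v hv hv'
    simp only [Finset.mem_image] at hv hv'
    obtain ⟨i, _, hi⟩ := hv
    obtain ⟨j, _, hj⟩ := hv'
    omega
  have hdisj2 : Disjoint (S.filter (fun j : Fin k => (j:ℕ) < n))
      ((Finset.univ.filter (fun i => δ i = 1)).filter (fun j : Fin k => (j:ℕ) < n)) := by
    rw [Finset.disjoint_left]
    intro i hi hi'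
    simp only [Finset.mem_filter] at hi hi'
    have := hS0 i hi.1
    omega
  rw [Vset, Finset.filter_union, hq2, hq1, Finset.card_union_of_disjoint hdisj1,
    Finset.card_image_of_injective _ hinj2, Finset.card_image_of_injective _ hinj1,
    Finset.filter_union, Finset.card_union_of_disjoint hdisj2]
  ring

lemma toFinset_ofFn (w : Fin a → ℕ) : (List.ofFn w).toFinset = Finset.univ.image w := by
  ext v
  simp [List.mem_ofFn, Set.mem_range]

lemma countP_ofFn (w : Fin a → ℕ) (hw : StrictMono w) (p : ℕ → Bool) :
    (List.ofFn w).countP p = ((Finset.univ.image w).filter (fun v => p v = true)).card := by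
  have hnd : (List.ofFn w).Nodup := (List.nodup_ofFn).mpr hw.injective
  rw [List.countP_eq_length_filter, ← List.toFinset_card_of_nodup (hnd.filter p),
    List.toFinset_filter, toFinset_ofFn]

lemma count_ofFn_mem (w : Fin a → ℕ) (hw : StrictMono w) {v : ℕ} (hv : ∃ t, w t = v) :
    (List.ofFn w).count v = 1 :=
  List.count_eq_one_of_mem ((List.nodup_ofFn).mpr hw.injective)
    (List.mem_ofFn.mpr hv)

lemma count_ofFn_not_mem (w : Fin a → ℕ) {v : ℕ} (hv : ¬ ∃ t, w t = v) :
    (List.ofFn w).count v = 0 := by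
  rw [List.count_eq_zero]
  intro hmem
  exact hv (List.mem_ofFn.mp hmem)

lemma count_ofFn_le_one (w : Fin a → ℕ) (hw : StrictMono w) (v : ℕ) :
    (List.ofFn w).count v ≤ 1 :=
  List.nodup_iff_count_le_one.mp ((List.nodup_ofFn).mpr hw.injective) v

lemma mem_take_ofFn {w : Fin a → ℕ} {p : ℕ} {v : ℕ} :
    v ∈ (List.ofFn w).take p ↔ ∃ t : Fin a, (t:ℕ) < p ∧ w t = v := by
  constructor
  · intro h
    obtain ⟨n, hn, hget⟩ := List.mem_iff_getElem.mp h
    rw [List.length_take, List.length_ofFn] at hn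
    have hn1 : n < p := lt_of_lt_of_le hn (min_le_left _ _)
    have hn2 : n < a := lt_of_lt_of_le hn (min_le_right _ _)
    refine ⟨⟨n, hn2⟩, hn1, ?_⟩
    rw [List.getElem_take] at hget
    rw [← hget]
    simp [List.getElem_ofFn]
  · rintro ⟨t, htp, hv⟩
    apply List.mem_iff_getElem.mpr
    refine ⟨t, ?_, ?_⟩
    · rw [List.length_take, List.length_ofFn]
      exact lt_min htp t.isLt
    · rw [List.getElem_take]
      rw [← hv]
      simp [List.getElem_ofFn]

def Smap (k : ℕ) (w : Fin a → ℕ) : Finset (Fin k) :=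
  Finset.univ.filter (fun i => ∃ t, w t = 2*(i:ℕ)+2)

lemma mem_Smap {w : Fin a → ℕ} {i : Fin k} : i ∈ Smap k w ↔ ∃ t, w t = 2*(i:ℕ)+2 := by
  simp [Smap]

lemma image_eq (δ : Fin k → ℕ) (w : Fin a → ℕ)
    (hm : StrictMono w)
    (hb : ∀ t, 1 ≤ w t ∧ w t ≤ 2 * k)
    (hwt : ∀ i : Fin k, (List.ofFn w).count (2 * (i : ℕ) + 1)
      = (List.ofFn w).count (2 * (i : ℕ) + 2) + δ i) :
    Finset.univ.image w = Vset δ (Smap k w) := by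
  ext v
  simp only [Finset.mem_image, Finset.mem_univ, true_and]
  rw [mem_Vset]
  constructor
  · rintro ⟨t, rfl⟩
    have h1 := (hb t).1
    have h2 := (hb t).2
    rcases Nat.even_or_odd (w t) with he | ho
    · obtain ⟨c, hc⟩ := he
      have hj : c - 1 < k := by omega
      refine Or.inl ⟨⟨c-1, hj⟩, ?_, by simp; omega⟩
      rw [mem_Smap]
      exact ⟨t, by simp; omega⟩
    · obtain ⟨c, hc⟩ := ho
      have hj : c < k := by omega
      have hcv : 2*((⟨c, hj⟩ : Fin k):ℕ)+1 = w t := by simp; omega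
      have hw1 : (List.ofFn w).count (2*c+1) = 1 :=
        count_ofFn_mem w hm ⟨t, by omega⟩
      have := hwt ⟨c, hj⟩
      simp only at this
      by_cases hc2 : ∃ t', w t' = 2*c+2
      · refine Or.inr ⟨⟨c, hj⟩, Or.inl ?_, hcv⟩
        rw [mem_Smap]
        exact hc2
      · have h0 : (List.ofFn w).count (2*c+2) = 0 := count_ofFn_not_mem w hc2
        refine Or.inr ⟨⟨c, hj⟩, Or.inr ?_, hcv⟩
        omega
  · rintro (⟨i, hiS, rfl⟩ | ⟨i, hi, rfl⟩)
    · exact mem_Smap.mp hiS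
    · have hcnt : 1 ≤ (List.ofFn w).count (2*(i:ℕ)+1) := by
        rcases hi with hiS | hd
        · obtain ⟨t, ht⟩ := mem_Smap.mp hiS
          have : (List.ofFn w).count (2*(i:ℕ)+2) = 1 := count_ofFn_mem w hm ⟨t, ht⟩
          rw [hwt i, this]
          omega
        · rw [hwt i, hd]
          omega
      have : (2*(i:ℕ)+1) ∈ List.ofFn w := List.one_le_count_iff.mp hcnt
      exact List.mem_ofFn.mp this

end OneColSpAux


open OneColSpAux


/-- Bijection between one-column `Sp_{2k}`-ballot tableaux and ballot sequences.  The alphabet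
`1 < 1̄ < ⋯ < k < k̄` is encoded by `1 < 2 < ⋯ < 2k` with `i ↦ 2i-1`, `ī ↦ 2i`.  A one-column
`Sp_{2k}`-ballot tableau of shape `(1^a)` and weight `δ ∈ {0,1}^k` is a strictly increasing
sequence of length `a` satisfying the symplectic column condition (at most `i` entries
`≤ ī = 2i`) and the ballot condition, with `δᵢ = #(i's) − #(ī's)`.  A
`((2k-a-|δ|)/2, (a-|δ|)/2)`-ballot sequence over `Z(δ) = {i : δᵢ = 0}` is the increasing
enumeration of `Z(δ)` with exactly `(a-|δ|)/2` terms marked (encoded by the marked subset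
`S ⊆ Z(δ)`), such that at every prefix the number of marked terms does not exceed the number
of unmarked terms.  These two sets are in bijection. -/
theorem one_column_spk_bijection (k a : ℕ) (ha : a ≤ k)
    (δ : Fin k → ℕ) (hδ : ∀ i, δ i ≤ 1)
    (hle : ∑ i, δ i ≤ a) (heven : 2 ∣ (a - ∑ i, δ i)) :
    Nonempty (
      {w : Fin a → ℕ //
        StrictMono w ∧
        (∀ t, 1 ≤ w t ∧ w t ≤ 2 * k) ∧
        (∀ i, 1 ≤ i → i ≤ k →
          ((List.ofFn w).countP (fun x => decide (x ≤ 2 * i))) ≤ i) ∧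
        (∀ i p, 1 ≤ i → i ≤ k →
          (((List.ofFn w).take p).count (2 * i)) ≤
            (((List.ofFn w).take p).count (2 * i - 1))) ∧
        (∀ i : Fin k,
          (List.ofFn w).count (2 * (i : ℕ) + 1) =
            (List.ofFn w).count (2 * (i : ℕ) + 2) + δ i)}
      ≃
      {S : Finset (Fin k) //
        (∀ i ∈ S, δ i = 0) ∧
        S.card = (a - ∑ i, δ i) / 2 ∧
        (∀ m : Fin k,
          (S.filter (fun i => i ≤ m)).card ≤
            ((Finset.univ.filter (fun i => δ i = 0 ∧ i ∉ S)).filter (fun i => i ≤ m)).card)}) := by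

  classical
  have hsd := OneColSpAux.sum_delta δ hδ
  -- the forward direction: properties of `Smap k w`
  have fwd : ∀ w : Fin a → ℕ, StrictMono w → (∀ t, 1 ≤ w t ∧ w t ≤ 2 * k) →
      (∀ i, 1 ≤ i → i ≤ k → ((List.ofFn w).countP (fun x => decide (x ≤ 2 * i))) ≤ i) →
      (∀ i : Fin k, (List.ofFn w).count (2 * (i : ℕ) + 1)
        = (List.ofFn w).count (2 * (i : ℕ) + 2) + δ i) →
      ((∀ i ∈ Smap k w, δ i = 0) ∧
       (Smap k w).card = (a - ∑ i, δ i) / 2 ∧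
       (∀ m : Fin k, ((Smap k w).filter (fun i => i ≤ m)).card ≤
         ((Finset.univ.filter (fun i => δ i = 0 ∧ i ∉ Smap k w)).filter
           (fun i => i ≤ m)).card)) := by
    intro w hm hb hcol hwt
    have hS0 : ∀ i ∈ Smap k w, δ i = 0 := by
      intro i hi
      obtain ⟨t, ht⟩ := mem_Smap.mp hi
      have hc2 : (List.ofFn w).count (2*(i:ℕ)+2) = 1 := count_ofFn_mem w hm ⟨t, ht⟩
      have hle1 := count_ofFn_le_one w hm (2*(i:ℕ)+1)
      have := hwt i
      omega
    have himg := image_eq δ w hm hb hwt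
    have hcards : a = 2 * (Smap k w).card + ∑ i, δ i := by
      have h1 : (Finset.univ.image w).card = a := by
        rw [Finset.card_image_of_injective _ hm.injective, Finset.card_fin]
      rw [himg, card_Vset δ _ hS0] at h1
      omega
    refine ⟨hS0, by omega, ?_⟩
    intro m
    have hn : (m:ℕ)+1 ≤ k := m.isLt
    have hcol' := hcol ((m:ℕ)+1) (by omega) hn
    rw [countP_ofFn w hm] at hcol'
    simp only [decide_eq_true_eq] at hcol'
    rw [himg, card_Vset_filter δ _ hS0 ((m:ℕ)+1)] at hcol'
    have hpart := partition_count δ hδ (Smap k w) hS0 ((m:ℕ)+1) hn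
    have e1 : (Smap k w).filter (fun i => i ≤ m)
        = (Smap k w).filter (fun j : Fin k => (j:ℕ) < (m:ℕ)+1) := by
      apply Finset.filter_congr
      intro j _
      rw [Fin.le_def]
      omega
    have e2 : (Finset.univ.filter (fun i => δ i = 0 ∧ i ∉ Smap k w)).filter (fun i => i ≤ m)
        = (Finset.univ.filter (fun i => δ i = 0 ∧ i ∉ Smap k w)).filter
            (fun j : Fin k => (j:ℕ) < (m:ℕ)+1) := by
      apply Finset.filter_congr
      intro j _
      rw [Fin.le_def]
      omega
    rw [e1, e2]
    omega
  refine ⟨Equiv.ofBijective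
    (fun x => ⟨Smap k x.1, fwd x.1 x.2.1 x.2.2.1 x.2.2.2.1 x.2.2.2.2.2⟩) ⟨?_, ?_⟩⟩
  · -- injectivity
    intro x y hxy
    have hS : Smap k x.1 = Smap k y.1 := congrArg Subtype.val hxy
    have hx := image_eq δ x.1 x.2.1 x.2.2.1 x.2.2.2.2.2
    have hy := image_eq δ y.1 y.2.1 y.2.2.1 y.2.2.2.2.2
    rw [← hS] at hy
    have hcV : (Vset δ (Smap k x.1)).card = a := by
      rw [← hx, Finset.card_image_of_injective _ x.2.1.injective, Finset.card_fin]
    have hx' : x.1 = ⇑((Vset δ (Smap k x.1)).orderEmbOfFin hcV) :=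
      Finset.orderEmbOfFin_unique hcV
        (fun t => by rw [← hx]; exact Finset.mem_image_of_mem _ (Finset.mem_univ t)) x.2.1
    have hy' : y.1 = ⇑((Vset δ (Smap k x.1)).orderEmbOfFin hcV) :=
      Finset.orderEmbOfFin_unique hcV
        (fun t => by rw [← hy]; exact Finset.mem_image_of_mem _ (Finset.mem_univ t)) y.2.1
    exact Subtype.ext (hx'.trans hy'.symm)
  · -- surjectivity
    rintro ⟨S, hS0, hcard, hpre⟩
    have hVcard : (Vset δ S).card = a := by
      rw [card_Vset δ S hS0]
      have h2 : 2*((a - ∑ i, δ i)/2) = a - ∑ i, δ i := Nat.mul_div_cancel' heven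
      omega
    set w : Fin a → ℕ := fun t => (Vset δ S).orderEmbOfFin hVcard t with hw
    have hm : StrictMono w := ((Vset δ S).orderEmbOfFin hVcard).strictMono
    have hmemV : ∀ t, w t ∈ Vset δ S := fun t => Finset.orderEmbOfFin_mem _ hVcard t
    have himg : Finset.univ.image w = Vset δ S := by
      apply Finset.coe_injective
      rw [Finset.coe_image, Finset.coe_univ, Set.image_univ]
      exact Finset.range_orderEmbOfFin _ hVcard
    have hex : ∀ v, (∃ t, w t = v) ↔ v ∈ Vset δ S := by
      intro v
      rw [← himg]
      simp
    have h22 : ∀ i : Fin k, (∃ t, w t = 2*(i:ℕ)+2) ↔ i ∈ S := by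
      intro i
      rw [hex, mem_Vset]
      constructor
      · rintro (⟨j, hj, hj2⟩ | ⟨j, hj, hj2⟩)
        · have : j = i := Fin.ext (by omega)
          subst this
          exact hj
        · omega
      · intro hi
        exact Or.inl ⟨i, hi, rfl⟩
    have h21 : ∀ i : Fin k, (∃ t, w t = 2*(i:ℕ)+1) ↔ (i ∈ S ∨ δ i = 1) := by
      intro i
      rw [hex, mem_Vset]
      constructor
      · rintro (⟨j, hj, hj2⟩ | ⟨j, hj, hj2⟩)
        · omega
        · have : j = i := Fin.ext (by omega)
          subst this
          exact hj
      · intro hi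
        exact Or.inr ⟨i, hi, rfl⟩
    have hbounds : ∀ t, 1 ≤ w t ∧ w t ≤ 2 * k := by
      intro t
      have hv := hmemV t
      rw [mem_Vset] at hv
      rcases hv with ⟨i, _, hi⟩ | ⟨i, _, hi⟩ <;>
        · have := i.isLt
          omega
    have hweight : ∀ i : Fin k, (List.ofFn w).count (2 * (i : ℕ) + 1)
        = (List.ofFn w).count (2 * (i : ℕ) + 2) + δ i := by
      intro i
      by_cases hiS : i ∈ S
      · rw [count_ofFn_mem w hm ((h21 i).mpr (Or.inl hiS)),
          count_ofFn_mem w hm ((h22 i).mpr hiS), hS0 i hiS]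
      · by_cases hd : δ i = 1
        · rw [count_ofFn_mem w hm ((h21 i).mpr (Or.inr hd)),
            count_ofFn_not_mem w (fun hc => hiS ((h22 i).mp hc)), hd]
        · have hd0 : δ i = 0 := by have := hδ i; omega
          rw [count_ofFn_not_mem w (fun hc => by
              rcases (h21 i).mp hc with h | h
              exacts [hiS h, hd h]),
            count_ofFn_not_mem w (fun hc => hiS ((h22 i).mp hc)), hd0]
    have hcol : ∀ n, 1 ≤ n → n ≤ k →
        ((List.ofFn w).countP (fun x => decide (x ≤ 2 * n))) ≤ n := by
      intro n h1n hnk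
      rw [countP_ofFn w hm]
      simp only [decide_eq_true_eq]
      rw [himg, card_Vset_filter δ S hS0 n]
      have hpart := partition_count δ hδ S hS0 n hnk
      have hm' := hpre ⟨n-1, by omega⟩
      have e1 : S.filter (fun i => i ≤ (⟨n-1, by omega⟩ : Fin k))
          = S.filter (fun j : Fin k => (j:ℕ) < n) := by
        apply Finset.filter_congr
        intro j _
        rw [Fin.le_def]
        simp only []
        omega
      have e2 : (Finset.univ.filter (fun i => δ i = 0 ∧ i ∉ S)).filter
            (fun i => i ≤ (⟨n-1, by omega⟩ : Fin k))
          = (Finset.univ.filter (fun i => δ i = 0 ∧ i ∉ S)).filter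
            (fun j : Fin k => (j:ℕ) < n) := by
        apply Finset.filter_congr
        intro j _
        rw [Fin.le_def]
        simp only []
        omega
      rw [e1, e2] at hm'
      omega
    have hballot : ∀ n p, 1 ≤ n → n ≤ k →
        (((List.ofFn w).take p).count (2 * n)) ≤
          (((List.ofFn w).take p).count (2 * n - 1)) := by
      intro n p h1n hnk
      by_cases hmem2 : (2*n) ∈ (List.ofFn w).take p
      · obtain ⟨t, htp, hwt2⟩ := mem_take_ofFn.mp hmem2
        have hv : w t ∈ Vset δ S := hmemV t
        rw [hwt2, mem_Vset] at hv
        rcases hv with ⟨i, hiS, hi2⟩ | ⟨i, _, hi1⟩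
        · obtain ⟨t', ht'⟩ := (h21 i).mpr (Or.inl hiS)
          have htt : (t':ℕ) < (t:ℕ) := by
            have hlt : w t' < w t := by rw [ht', hwt2]; omega
            exact hm.lt_iff_lt.mp hlt
          have hmem1 : (2*n - 1) ∈ (List.ofFn w).take p :=
            mem_take_ofFn.mpr ⟨t', by omega, by rw [ht']; omega⟩
          have hc1 : 1 ≤ ((List.ofFn w).take p).count (2*n-1) :=
            List.one_le_count_iff.mpr hmem1
          have hnd : ((List.ofFn w).take p).Nodup :=
            (List.take_sublist p _).nodup ((List.nodup_ofFn).mpr hm.injective)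
          have hc2 : ((List.ofFn w).take p).count (2*n) ≤ 1 :=
            List.nodup_iff_count_le_one.mp hnd _
          omega
        · omega
      · rw [List.count_eq_zero.mpr hmem2]
        exact Nat.zero_le _
    refine ⟨⟨w, hm, hbounds, hcol, hballot, hweight⟩, ?_⟩
    apply Subtype.ext
    show Smap k w = S
    ext i
    rw [mem_Smap, h22]
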